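/- Let n ≥ 2 and let M be the n×n tridiagonal matrix determined by real numbers a_1,…,a_n and b_1,…,b_{n−1}, all of which are nonzero. Then M is invertible, (n−1)-nonnegative and (n−1)-irreducible if and only if all of the following hold: b_i > 0 for all 1 ≤ i ≤ n−1; [a_x; a_{x−1},…,a_1; b_{x−1},…,b_1] > 0 for all 1 ≤ x ≤ n−2; [a_{n−1}; a_{n−2},…,a_1; b_{n−2},…,b_1] = 0; and [a_n; a_{n−1},…,a_2; b_{n−1},…,b_2] = 0. -/

import Mathlib

open Matrix

/-- A square real matrix is `k`-nonnegative if every minor of order at most `k`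
(indexed by strictly increasing row and column selections) is nonnegative. -/
def IsKNonneg {n : ℕ} (k : ℕ) (X : Matrix (Fin n) (Fin n) ℝ) : Prop :=
  ∀ m : ℕ, m ≤ k → ∀ I J : Fin m → Fin n, StrictMono I → StrictMono J →
    0 ≤ (X.submatrix I J).det

/-- The Chevalley generator `e_i(a)` (0-based index `i`): the identity matrix with
entry `a` in position `(i, i+1)`.  `f_i(a)` is its transpose. -/
def chevE (n : ℕ) (i : ℕ) (a : ℝ) : Matrix (Fin n) (Fin n) ℝ :=
  fun p q => if (p : ℕ) = (q : ℕ) then 1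
    else if (p : ℕ) = i ∧ (q : ℕ) = i + 1 then a
    else 0

/-- A matrix is a Chevalley generator with positive parameter: some `e_i(a)` or
`f_i(a) = e_i(a)ᵀ` with `a > 0`. -/
def IsChevalley {n : ℕ} (M : Matrix (Fin n) (Fin n) ℝ) : Prop :=
  ∃ i a, i + 1 < n ∧ 0 < a ∧ (M = chevE n i a ∨ M = (chevE n i a)ᵀ)

/-- A `k`-nonnegative invertible matrix `M` is `k`-irreducible if in any factorization
`M = R * S` with `R`, `S` invertible and `k`-nonnegative, neither factor is a Chevalley
generator with positive parameter. -/
def KIrreducible {n : ℕ} (k : ℕ) (M : Matrix (Fin n) (Fin n) ℝ) : Prop :=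
  ∀ R S : Matrix (Fin n) (Fin n) ℝ, IsUnit R → IsUnit S →
    IsKNonneg k R → IsKNonneg k S → M = R * S →
    ¬ IsChevalley R ∧ ¬ IsChevalley S

/-- The `n × n` tridiagonal matrix with diagonal entries `a 0, …, a (n-1)`,
superdiagonal entries `b 0, …, b (n-2)`, and subdiagonal entries all `1`. -/
def tridiag (n : ℕ) (a b : ℕ → ℝ) : Matrix (Fin n) (Fin n) ℝ :=
  fun p q => if (p : ℕ) = (q : ℕ) then a p
    else if (q : ℕ) = (p : ℕ) + 1 then b p
    else if (p : ℕ) = (q : ℕ) + 1 then 1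
    else 0

/-- The continued fraction `[a 0; a 1, …, a m; b 1, …, b m]`, defined by
`[a 0;;] = a 0` and `[a 0; a 1,…,a m; b 1,…,b m] = a 0 - b 1 / [a 1; a 2,…,a m; b 2,…,b m]`. -/
noncomputable def contFrac : (ℕ → ℝ) → (ℕ → ℝ) → ℕ → ℝ
  | a, _, 0 => a 0
  | a, b, m + 1 => a 0 - b 1 / contFrac (fun t => a (t + 1)) (fun t => b (t + 1)) m



namespace TriAux

noncomputable section

/-- determinant of the contiguous tridiagonal block starting at row/col `i` of length `m`,
 with diagonal `α`, superdiagonal `β`, subdiagonal `γ` (entry `(p+1,p)` is `γ p`). -/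
def dd (α β γ : ℕ → ℝ) (i : ℕ) : ℕ → ℝ
  | 0 => 1
  | 1 => α i
  | (m+2) => α (i+m+1) * dd α β γ i (m+1) - γ (i+m) * β (i+m) * dd α β γ i m

variable {α β γ : ℕ → ℝ}

@[simp] lemma dd_zero (i : ℕ) : dd α β γ i 0 = 1 := rfl
@[simp] lemma dd_one (i : ℕ) : dd α β γ i 1 = α i := rfl
lemma dd_two (i m : ℕ) : dd α β γ i (m+2)
    = α (i+m+1) * dd α β γ i (m+1) - γ (i+m) * β (i+m) * dd α β γ i m := rfl

/-- `dd` depends only on the product `γ * β`. -/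
lemma dd_swap (i : ℕ) : ∀ m, dd α β γ i m = dd α γ β i m := by
  intro m
  induction m using Nat.strong_induction_on with
  | _ m IH =>
    match m with
    | 0 => rfl
    | 1 => rfl
    | (m+2) => rw [dd_two, dd_two, IH (m+1) (by omega), IH m (by omega)]; ring

/-- congruence: `dd` only uses `α` on `[i, i+m)` and `β, γ` on `[i, i+m-1)`. -/
lemma dd_congr {α' β' γ' : ℕ → ℝ} (i : ℕ) :
    ∀ m, (∀ t, t < m → α (i+t) = α' (i+t)) →
    (∀ t, t + 1 < m → γ (i+t) * β (i+t) = γ' (i+t) * β' (i+t)) →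
    dd α β γ i m = dd α' β' γ' i m := by
  intro m
  induction m using Nat.strong_induction_on with
  | _ m IH =>
    match m with
    | 0 => intro _ _; rfl
    | 1 => intro h _; exact h 0 (by omega)
    | (m+2) =>
      intro h1 h2
      have e1 : α (i+m+1) = α' (i+m+1) := by
        have := h1 (m+1) (by omega); rwa [show i+(m+1) = i+m+1 by omega] at this
      have e2 : γ (i+m) * β (i+m) = γ' (i+m) * β' (i+m) := h2 m (by omega)
      rw [dd_two, dd_two, IH (m+1) (by omega) (fun t ht => h1 t (by omega))
          (fun t ht => h2 t (by omega)),
        IH m (by omega) (fun t ht => h1 t (by omega)) (fun t ht => h2 t (by omega)), e1, e2]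

/-- Desnanot–Jacobi identity for tridiagonal blocks. -/
lemma dd_DJ (i : ℕ) : ∀ m, dd α β γ i (m+2) * dd α β γ (i+1) m
    = dd α β γ i (m+1) * dd α β γ (i+1) (m+1)
      - ∏ t ∈ Finset.range (m+1), (γ (i+t) * β (i+t)) := by
  intro m
  induction m with
  | zero => simp [dd_two, dd_one]; ring
  | succ m IH =>
    have e1 : dd α β γ i (m+3) = α (i+m+2) * dd α β γ i (m+2)
        - γ (i+m+1) * β (i+m+1) * dd α β γ i (m+1) := dd_two i (m+1)
    have e2 : dd α β γ (i+1) (m+2) = α (i+m+2) * dd α β γ (i+1) (m+1)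
        - γ (i+m+1) * β (i+m+1) * dd α β γ (i+1) m := by
      have h := dd_two (α := α) (β := β) (γ := γ) (i+1) m
      rwa [show i+1+m+1 = i+m+2 by omega, show i+1+m = i+m+1 by omega] at h
    have e3 : ∏ t ∈ Finset.range (m+2), (γ (i+t) * β (i+t))
        = (∏ t ∈ Finset.range (m+1), (γ (i+t) * β (i+t))) * (γ (i+m+1) * β (i+m+1)) := by
      rw [Finset.prod_range_succ, show i+(m+1) = i+m+1 by omega]
    rw [e3]
    calc dd α β γ i (m+3) * dd α β γ (i+1) (m+1)
        = α (i+m+2) * (dd α β γ i (m+2) * dd α β γ (i+1) (m+1))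
          - γ (i+m+1) * β (i+m+1) * (dd α β γ i (m+1) * dd α β γ (i+1) (m+1)) := by
          rw [e1]; ring
      _ = dd α β γ i (m+2) * dd α β γ (i+1) (m+2)
          - γ (i+m+1) * β (i+m+1)
            * (dd α β γ i (m+1) * dd α β γ (i+1) (m+1)
               - dd α β γ i (m+2) * dd α β γ (i+1) m) := by
          rw [e2]; ring
      _ = _ := by rw [IH]; ring

/-- changing `α` at the last index of the block. -/
lemma dd_shift_last {α' : ℕ → ℝ} (i : ℕ) (δ : ℝ) :
    ∀ m, 1 ≤ m → (∀ t, t < m - 1 → α' (i+t) = α (i+t)) → α' (i+m-1) = α (i+m-1) + δ →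
    dd α' β γ i m = dd α β γ i m + δ * dd α β γ i (m-1) := by
  intro m
  match m with
  | 0 => intro h; exact absurd h (by omega)
  | 1 => intro _ _ h; simpa using h
  | (m+2) =>
    intro _ h1 h2
    have l1 : dd α' β γ i (m+1) = dd α β γ i (m+1) :=
      dd_congr i (m+1) (fun t ht => h1 t (by omega)) (fun t _ => rfl)
    have l2 : dd α' β γ i m = dd α β γ i m :=
      dd_congr i m (fun t ht => h1 t (by omega)) (fun t _ => rfl)
    have h2' : α' (i+m+1) = α (i+m+1) + δ := by
      rwa [show i+(m+2)-1 = i+m+1 by omega] at h2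
    rw [dd_two, dd_two, l1, l2, h2', show m+2-1 = m+1 by omega]
    ring

/-- changing `α` at the first index of the block. -/
lemma dd_shift_first {α' : ℕ → ℝ} (i : ℕ) (δ : ℝ)
    (h1 : ∀ t, 1 ≤ t → α' (i+t) = α (i+t)) (h0 : α' i = α i + δ) :
    ∀ m, 1 ≤ m → dd α' β γ i m = dd α β γ i m + δ * dd α β γ (i+1) (m-1) := by
  intro m
  induction m using Nat.strong_induction_on with
  | _ m IH =>
    match m with
    | 0 => intro h; exact absurd h (by omega)
    | 1 => intro _; simpa using h0
    | 2 =>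
      intro _
      have e : dd α' β γ i 2 = α' (i+1) * α' i - γ i * β i := by
        rw [show (2:ℕ) = 0+2 from rfl, dd_two]; simp
      have e' : dd α β γ i 2 = α (i+1) * α i - γ i * β i := by
        rw [show (2:ℕ) = 0+2 from rfl, dd_two]; simp
      rw [e, e', h0, h1 1 (by omega)]
      simp [dd_one]
      ring
    | (m+3) =>
      intro _
      have E1 : dd α' β γ i (m+3) = α' (i+m+2) * dd α' β γ i (m+2)
          - γ (i+m+1) * β (i+m+1) * dd α' β γ i (m+1) := dd_two i (m+1)
      have E2 : dd α β γ i (m+3) = α (i+m+2) * dd α β γ i (m+2)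
          - γ (i+m+1) * β (i+m+1) * dd α β γ i (m+1) := dd_two i (m+1)
      have E3 : dd α β γ (i+1) (m+2) = α (i+m+2) * dd α β γ (i+1) (m+1)
          - γ (i+m+1) * β (i+m+1) * dd α β γ (i+1) m := by
        have h := dd_two (α := α) (β := β) (γ := γ) (i+1) m
        rwa [show i+1+m+1 = i+m+2 by omega, show i+1+m = i+m+1 by omega] at h
      have ha : α' (i+m+2) = α (i+m+2) := by
        have := h1 (m+2) (by omega); rwa [show i+(m+2) = i+m+2 by omega] at this
      rw [E1, E2, IH (m+2) (by omega) (by omega), IH (m+1) (by omega) (by omega), ha,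
        show m+3-1 = m+2 by omega, show m+2-1 = m+1 by omega, show m+1-1 = m by omega, E3]
      ring

/-- corner identity: simultaneous compatible change of `α` and `β` at index `j = i+m-2`
(second-to-last of the block) leaves the block determinant unchanged. -/
lemma dd_corner_last {α' β' : ℕ → ℝ} (i j : ℕ) (c : ℝ)
    (hα : ∀ t, t ≠ j → α' t = α t) (hαj : α' j = α j + c * γ j)
    (hβ : ∀ t, t ≠ j → β' t = β t) (hβj : β' j = β j + c * α (j+1)) :
    ∀ m, 2 ≤ m → i + m = j + 2 → dd α' β' γ i m = dd α β γ i m := by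
  intro m
  match m with
  | 0 => intro h; exact absurd h (by omega)
  | 1 => intro h; exact absurd h (by omega)
  | (m+2) =>
    intro _ hij
    have hj : i + m = j := by omega
    have l1 : dd α' β' γ i (m+1) = dd α β γ i (m+1) + (c * γ j) * dd α β γ i m := by
      have := dd_shift_last (β := β) (γ := γ) (α' := α') i (c * γ j) (m+1) (by omega)
        (fun t ht => hα (i+t) (by omega))
        (by rw [show i+(m+1)-1 = i+m by omega, hj, hαj])
      -- the β function in dd differs (β' vs β) only at j = i+m which is outside window m+1
      have cong1 : dd α' β' γ i (m+1) = dd α' β γ i (m+1) :=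
        dd_congr i (m+1) (fun t _ => rfl) (fun t ht => by rw [hβ (i+t) (by omega)])
      rw [cong1, this, show m+1-1 = m by omega]
    have l2 : dd α' β' γ i m = dd α β γ i m :=
      dd_congr i m (fun t ht => hα (i+t) (by omega)) (fun t ht => by rw [hβ (i+t) (by omega)])
    rw [dd_two, dd_two, l1, l2, hα (i+m+1) (by omega), hj, hβj]
    ring

/-- corner identity at the first edge of the block. -/
lemma dd_corner_first {α' γ' : ℕ → ℝ} (j : ℕ) (c : ℝ)
    (hα : ∀ t, t ≠ j+1 → α' t = α t) (hαj : α' (j+1) = α (j+1) + c * β j)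
    (hγ : ∀ t, t ≠ j → γ' t = γ t) (hγj : γ' j = γ j + c * α j) :
    ∀ m, dd α' β γ' j m = dd α β γ j m := by
  have key : dd α' β γ' j 2 = dd α β γ j 2 := by
    have e2' : dd α' β γ' j 2 = α' (j+1) * α' j - γ' j * β j := by
      rw [show (2:ℕ) = 0+2 from rfl, dd_two]; simp
    have e2 : dd α β γ j 2 = α (j+1) * α j - γ j * β j := by
      rw [show (2:ℕ) = 0+2 from rfl, dd_two]; simp
    rw [e2', e2, hαj, hγj, hα j (by omega)]; ring
  intro m
  induction m using Nat.strong_induction_on with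
  | _ m IH =>
    match m with
    | 0 => rfl
    | 1 => simp [hα j (by omega)]
    | 2 => exact key
    | (m+3) =>
      have E' : dd α' β γ' j (m+3) = α' (j+m+2) * dd α' β γ' j (m+2)
          - γ' (j+m+1) * β (j+m+1) * dd α' β γ' j (m+1) := dd_two j (m+1)
      have E : dd α β γ j (m+3) = α (j+m+2) * dd α β γ j (m+2)
          - γ (j+m+1) * β (j+m+1) * dd α β γ j (m+1) := dd_two j (m+1)
      rw [E', E, IH (m+2) (by omega), IH (m+1) (by omega),
        hα (j+m+2) (by omega), hγ (j+m+1) (by omega)]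

open Matrix
/-- general tridiagonal matrix: diagonal `α`, superdiagonal `β`, subdiagonal `γ`
(the entry `(q+1, q)` is `γ q`). -/
def trid (n : ℕ) (α β γ : ℕ → ℝ) : Matrix (Fin n) (Fin n) ℝ :=
  fun p q => if (p : ℕ) = (q : ℕ) then α p
    else if (q : ℕ) = (p : ℕ) + 1 then β p
    else if (p : ℕ) = (q : ℕ) + 1 then γ q
    else 0

variable {n : ℕ}

lemma trid_diag {p q : Fin n} (h : (p:ℕ) = q) : trid n α β γ p q = α p := by
  simp [trid, h]
lemma trid_super {p q : Fin n} (h : (q:ℕ) = (p:ℕ)+1) : trid n α β γ p q = β p := by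
  have h1 : ¬((p:ℕ) = q) := by omega
  simp [trid, h1, h]
lemma trid_sub {p q : Fin n} (h : (p:ℕ) = (q:ℕ)+1) : trid n α β γ p q = γ q := by
  have h1 : ¬((p:ℕ) = q) := by omega
  have h2 : ¬((q:ℕ) = (p:ℕ)+1) := by omega
  simp only [trid]
  rw [if_neg h1, if_neg h2, if_pos h]
lemma trid_far {p q : Fin n} (h : (q:ℕ) > (p:ℕ)+1 ∨ (p:ℕ) > (q:ℕ)+1) :
    trid n α β γ p q = 0 := by
  have h1 : ¬((p:ℕ) = q) := by omega
  have h2 : ¬((q:ℕ) = (p:ℕ)+1) := by omega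
  have h3 : ¬((p:ℕ) = (q:ℕ)+1) := by omega
  simp [trid, h1, h2, h3]

/-- index map of a contiguous block. -/
def blk (n i m : ℕ) (h : i + m ≤ n) : Fin m → Fin n :=
  fun l => ⟨i + l.1, by have := l.isLt; omega⟩

lemma blk_strictMono {i m : ℕ} (h : i + m ≤ n) : StrictMono (blk n i m h) := by
  intro u v huv
  simp only [blk, Fin.mk_lt_mk]
  have : (u:ℕ) < v := huv
  omega

@[simp] lemma blk_apply {i m : ℕ} (h : i + m ≤ n) (l : Fin m) :
    (blk n i m h l : ℕ) = i + l := rfl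

lemma det_block (α β γ : ℕ → ℝ) :
    ∀ (m : ℕ), ∀ (i : ℕ) (h : i + m ≤ n),
    ((trid n α β γ).submatrix (blk n i m h) (blk n i m h)).det = dd α β γ i m := by
  intro m
  induction m using Nat.strong_induction_on with
  | _ m IH =>
    match m with
    | 0 => intro i h; simp [Matrix.det_fin_zero]
    | 1 =>
      intro i h
      rw [Matrix.det_fin_one]
      simp only [Matrix.submatrix_apply]
      rw [trid_diag (by simp)]
      simp
    | (m+2) =>
      intro i h
      set A := (trid n α β γ).submatrix (blk n i (m+2) h) (blk n i (m+2) h) with hA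
      rw [Matrix.det_succ_row A (Fin.last (m+1))]
      rw [Fin.sum_univ_castSucc, Fin.sum_univ_castSucc]
      have hzero : ∀ j : Fin m,
          (-1:ℝ) ^ ((Fin.last (m+1) : ℕ) + ((j.castSucc.castSucc : Fin (m+2)) : ℕ))
            * A (Fin.last (m+1)) j.castSucc.castSucc
            * (A.submatrix (Fin.last (m+1)).succAbove j.castSucc.castSucc.succAbove).det = 0 := by
        intro j
        have : A (Fin.last (m+1)) j.castSucc.castSucc = 0 := by
          rw [hA, Matrix.submatrix_apply]
          apply trid_far
          right
          simp only [blk_apply, Fin.val_last, Fin.coe_castSucc]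
          have := j.isLt; omega
        rw [this]; ring
      rw [Finset.sum_eq_zero (fun j _ => hzero j), zero_add]
      -- the two surviving terms
      have hAll : A (Fin.last (m+1)) (Fin.last (m+1)) = α (i+m+1) := by
        rw [hA, Matrix.submatrix_apply, trid_diag (by rfl)]
        simp only [blk_apply, Fin.val_last]
        rfl
      have hAlc : A (Fin.last (m+1)) ((Fin.last m).castSucc) = γ (i+m) := by
        rw [hA, Matrix.submatrix_apply,
          trid_sub (by simp only [blk_apply, Fin.coe_castSucc, Fin.val_last]; omega)]
        simp only [blk_apply, Fin.coe_castSucc, Fin.val_last]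
      -- principal cofactor
      have hsub1 : (A.submatrix (Fin.last (m+1)).succAbove (Fin.last (m+1)).succAbove).det
          = dd α β γ i (m+1) := by
        rw [Fin.succAbove_last, hA, Matrix.submatrix_submatrix]
        have : (blk n i (m+2) h) ∘ Fin.castSucc = blk n i (m+1) (by omega) := by
          funext l; simp only [Function.comp_apply, blk]; rfl
        rw [this]
        exact IH (m+1) (by omega) i (by omega)
      -- the other cofactor
      have hsub2 : (A.submatrix (Fin.last (m+1)).succAbove
          ((Fin.last m).castSucc).succAbove).det = β (i+m) * dd α β γ i m := by
        rw [Fin.succAbove_last]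
        set C := A.submatrix Fin.castSucc ((Fin.last m).castSucc).succAbove with hC
        rw [Matrix.det_succ_column C (Fin.last m)]
        have hCzero : ∀ r : Fin m,
            (-1:ℝ) ^ (((r.castSucc : Fin (m+1)) : ℕ) + ((Fin.last m : Fin (m+1)) : ℕ))
              * C r.castSucc (Fin.last m)
              * (C.submatrix r.castSucc.succAbove (Fin.last m).succAbove).det = 0 := by
          intro r
          have : C r.castSucc (Fin.last m) = 0 := by
            rw [hC, Matrix.submatrix_apply]
            have hcol : ((Fin.last m).castSucc).succAbove (Fin.last m) = Fin.last (m+1) := by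
              rw [Fin.succAbove_of_le_castSucc _ _ (le_refl _)]
              ext; simp
            rw [hcol, hA, Matrix.submatrix_apply]
            apply trid_far
            left
            simp only [blk_apply, Fin.val_last, Fin.coe_castSucc]
            have := r.isLt; omega
          rw [this]; ring
        rw [Fin.sum_univ_castSucc, Finset.sum_eq_zero (fun r _ => hCzero r), zero_add]
        have hClast : C (Fin.last m) (Fin.last m) = β (i+m) := by
          rw [hC, Matrix.submatrix_apply]
          have hcol : ((Fin.last m).castSucc).succAbove (Fin.last m) = Fin.last (m+1) := by
            rw [Fin.succAbove_of_le_castSucc _ _ (le_refl _)]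
            ext; simp
          rw [hcol, hA, Matrix.submatrix_apply,
            trid_super (by simp only [blk_apply, Fin.coe_castSucc, Fin.val_last]; omega)]
          simp only [blk_apply, Fin.coe_castSucc, Fin.val_last]
        have hCsub : (C.submatrix (Fin.last m).succAbove (Fin.last m).succAbove).det
            = dd α β γ i m := by
          rw [Fin.succAbove_last, hC, Matrix.submatrix_submatrix, hA,
            Matrix.submatrix_submatrix]
          have h1 : (blk n i (m+2) h) ∘ (Fin.castSucc ∘ Fin.castSucc)
              = blk n i m (by omega) := by
            funext l; simp only [Function.comp_apply, blk]; rfl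
          have h2 : (blk n i (m+2) h) ∘ (((Fin.last m).castSucc).succAbove ∘ Fin.castSucc)
              = blk n i m (by omega) := by
            funext l
            have : ((Fin.last m).castSucc).succAbove l.castSucc = l.castSucc.castSucc := by
              apply Fin.succAbove_of_castSucc_lt
              simp only [Fin.lt_def, Fin.coe_castSucc, Fin.val_last]
              exact l.isLt
            simp only [Function.comp_apply, this, blk]; rfl
          rw [h1, h2]
          exact IH m (by omega) i (by omega)
        rw [hClast, hCsub]
        simp [Fin.val_last]
      rw [hAll, hAlc, hsub1, hsub2]
      simp only [Fin.val_last, Fin.coe_castSucc]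
      have s1 : (-1:ℝ) ^ ((m+1) + (m+1)) = 1 := by
        rw [← two_mul]; exact (Even.neg_one_pow ⟨m+1, by ring⟩)
      have s2 : (-1:ℝ) ^ ((m+1) + m) = -1 := by
        exact (Odd.neg_one_pow ⟨m, by ring⟩)
      rw [s1, s2, dd_two]
      ring

lemma gap_of_strictMono {m n : ℕ} {I : Fin m → Fin n} (hI : StrictMono I) :
    ∀ (d : ℕ) (s t : Fin m), (t:ℕ) = (s:ℕ) + d → (I s : ℕ) + d ≤ I t := by
  intro d
  induction d with
  | zero =>
    intro s t h
    have : s = t := Fin.ext (by omega)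
    subst this; simp
  | succ d IH =>
    intro s t h
    have ht : (t:ℕ) ≥ 1 := by omega
    have hlt := t.isLt
    set t' : Fin m := ⟨(t:ℕ) - 1, by omega⟩ with ht'
    have h1 := IH s t' (by simp only [ht']; omega)
    have h2 : I t' < I t := hI (by rw [Fin.lt_def]; simp only [ht']; omega)
    rw [Fin.lt_def] at h2
    simp only [ht'] at h1 h2
    omega

/-- Minor-factorization nonnegativity criterion for tridiagonal matrices. -/
lemma crit (n k : ℕ) (α β γ : ℕ → ℝ)
    (hβ : ∀ p, p+1 < n → 0 ≤ β p) (hγ : ∀ p, p+1 < n → 0 ≤ γ p)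
    (hd : ∀ i m, 1 ≤ m → m ≤ k → i + m ≤ n → 0 ≤ dd α β γ i m) :
    IsKNonneg k (trid n α β γ) := by
  intro m
  induction m using Nat.strong_induction_on with
  | _ m IH =>
    intro hmk I J hI hJ
    match m, hmk, I, J, hI, hJ with
    | 0, hmk, I, J, hI, hJ => simp [Matrix.det_fin_zero]
    | (m+1), hmk, I, J, hI, hJ =>
      set T := trid n α β γ with hT
      set i0 : ℕ := ↑(I 0) with hi0
      set j0 : ℕ := ↑(J 0) with hj0
      by_cases hfar1 : j0 ≥ i0 + 2
      · -- first row of the minor is zero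
        rw [Matrix.det_eq_zero_of_row_eq_zero 0 (fun l => ?_)]
        apply trid_far
        left
        have := gap_of_strictMono hJ (l:ℕ) 0 l (by simp)
        omega
      by_cases hfar2 : i0 ≥ j0 + 2
      · rw [Matrix.det_eq_zero_of_column_eq_zero 0 (fun l => ?_)]
        apply trid_far
        right
        have := gap_of_strictMono hI (l:ℕ) 0 l (by simp)
        omega
      by_cases hsup : j0 = i0 + 1
      · -- peel off a single superdiagonal entry
        rw [Matrix.det_succ_row_zero]
        rw [Finset.sum_eq_single (0 : Fin (m+1))]
        · have hone : ((0 : Fin (m+1)) : ℕ) = 0 := rfl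
          rw [hone, pow_zero, one_mul, Fin.succAbove_zero]
          have hentry : (T.submatrix I J) 0 0 = β i0 := by
            rw [Matrix.submatrix_apply]
            exact trid_super hsup
          rw [hentry]
          apply mul_nonneg
          · exact hβ i0 (by have := (J 0).isLt; omega)
          · rw [Matrix.submatrix_submatrix]
            exact IH m (by omega) (by omega) _ _
              (hI.comp Fin.strictMono_succ) (hJ.comp Fin.strictMono_succ)
        · intro b _ hb
          have hentry : (T.submatrix I J) 0 b = 0 := by
            rw [Matrix.submatrix_apply]
            apply trid_far
            left
            have hbpos : 1 ≤ (b:ℕ) := by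
              by_contra hh
              refine hb (Fin.ext ?_)
              simp only [Fin.val_zero]
              omega
            have := gap_of_strictMono hJ (b:ℕ) 0 b (by simp)
            omega
          rw [hentry]; ring
        · intro h; exact absurd (Finset.mem_univ _) h
      by_cases hsub : i0 = j0 + 1
      · rw [Matrix.det_succ_column_zero]
        rw [Finset.sum_eq_single (0 : Fin (m+1))]
        · have hone : ((0 : Fin (m+1)) : ℕ) = 0 := rfl
          rw [hone, pow_zero, one_mul, Fin.succAbove_zero]
          have hentry : (T.submatrix I J) 0 0 = γ j0 := by
            rw [Matrix.submatrix_apply]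
            exact trid_sub hsub
          rw [hentry]
          apply mul_nonneg
          · exact hγ j0 (by have := (I 0).isLt; omega)
          · rw [Matrix.submatrix_submatrix]
            exact IH m (by omega) (by omega) _ _
              (hI.comp Fin.strictMono_succ) (hJ.comp Fin.strictMono_succ)
        · intro b _ hb
          have hentry : (T.submatrix I J) b 0 = 0 := by
            rw [Matrix.submatrix_apply]
            apply trid_far
            right
            have hbpos : 1 ≤ (b:ℕ) := by
              by_contra hh
              refine hb (Fin.ext ?_)
              simp only [Fin.val_zero]
              omega
            have := gap_of_strictMono hI (b:ℕ) 0 b (by simp)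
            omega
          rw [hentry]; ring
        · intro h; exact absurd (Finset.mem_univ _) h
      -- main diagonal case
      have hdiag : i0 = j0 := by omega
      set S := Finset.filter
        (fun l : Fin (m+1) => ¬((I l : ℕ) = i0 + l ∧ (J l : ℕ) = i0 + l)) Finset.univ with hS
      by_cases hne : S.Nonempty
      case neg =>
        -- the whole minor is a contiguous principal block
        have hrun : ∀ l : Fin (m+1), (I l : ℕ) = i0 + l ∧ (J l : ℕ) = i0 + l := by
          intro l
          by_contra hc
          exact hne ⟨l, Finset.mem_filter.mpr ⟨Finset.mem_univ _, hc⟩⟩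
        have hrange : i0 + (m+1) ≤ n := by
          have h1 := (hrun (Fin.last m)).1
          have := (I (Fin.last m)).isLt
          simp only [Fin.val_last] at h1
          omega
        have hIeq : I = blk n i0 (m+1) hrange := by
          funext l; exact Fin.ext (by simp [blk, (hrun l).1])
        have hJeq : J = blk n i0 (m+1) hrange := by
          funext l; exact Fin.ext (by simp [blk, (hrun l).2])
        rw [hIeq, hJeq, hT, det_block]
        exact hd i0 (m+1) (by omega) hmk hrange
      case pos =>
        set k0 := S.min' hne with hk0
        have hk0S : k0 ∈ S := S.min'_mem hne
        have h0S : (0 : Fin (m+1)) ∉ S := by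
          simp only [hS, Finset.mem_filter, Finset.mem_univ, true_and, not_not]
          constructor <;> (simp only [Fin.val_zero]; omega)
        have hr1 : 1 ≤ (k0:ℕ) := by
          by_contra hh
          have : k0 = 0 := Fin.ext (by simp only [Fin.val_zero]; omega)
          exact h0S (this ▸ hk0S)
        have hrun : ∀ l : Fin (m+1), (l:ℕ) < (k0:ℕ) →
            (I l : ℕ) = i0 + l ∧ (J l : ℕ) = i0 + l := by
          intro l hl
          by_contra hc
          have hmem : l ∈ S := Finset.mem_filter.mpr ⟨Finset.mem_univ _, hc⟩
          have := S.min'_le l hmem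
          rw [← hk0] at this
          exact absurd (lt_of_lt_of_le hl this) (lt_irrefl _)
        -- lower bounds at the break position
        have hIlow : i0 + (k0:ℕ) ≤ (I k0 : ℕ) := by
          have hprev := (hrun ⟨(k0:ℕ)-1, by omega⟩ (by show (k0:ℕ)-1 < (k0:ℕ); omega)).1
          have := gap_of_strictMono hI 1 ⟨(k0:ℕ)-1, by omega⟩ k0 (by simp; omega)
          simp at hprev this
          omega
        have hJlow : i0 + (k0:ℕ) ≤ (J k0 : ℕ) := by
          have hprev := (hrun ⟨(k0:ℕ)-1, by omega⟩ (by show (k0:ℕ)-1 < (k0:ℕ); omega)).2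
          have := gap_of_strictMono hJ 1 ⟨(k0:ℕ)-1, by omega⟩ k0 (by simp; omega)
          simp at hprev this
          omega
        have hbreak : (I k0 : ℕ) ≥ i0 + (k0:ℕ) + 1 ∨ (J k0 : ℕ) ≥ i0 + (k0:ℕ) + 1 := by
          have hmem := (Finset.mem_filter.mp hk0S).2
          omega
        -- split the minor at position k0
        set p : ℕ := (k0:ℕ) with hp
        set q : ℕ := m + 1 - p with hq
        have hpq : p + q = m + 1 := by omega
        have hpm : p ≤ m := by have := k0.isLt; omega
        set u : Fin p → Fin (m+1) := fun l => ⟨(l:ℕ), by have := l.isLt; omega⟩ with hu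
        set v : Fin q → Fin (m+1) := fun l => ⟨p + (l:ℕ), by have := l.isLt; omega⟩ with hv
        set e : Fin p ⊕ Fin q ≃ Fin (m+1) := finSumFinEquiv.trans (finCongr hpq) with he
        have heu : ∀ l, e (Sum.inl l) = u l := by
          intro l; apply Fin.ext
          simp [he, hu, finSumFinEquiv]
        have hev : ∀ l, e (Sum.inr l) = v l := by
          intro l; apply Fin.ext
          simp [he, hv, finSumFinEquiv]
        set A := T.submatrix I J with hAdef
        have hdet : A.det = (A.submatrix ⇑e ⇑e).det :=
          (Matrix.det_submatrix_equiv_self e A).symm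
        have hblocks : A.submatrix ⇑e ⇑e
            = Matrix.fromBlocks (A.submatrix u u) (A.submatrix u v)
                (A.submatrix v u) (A.submatrix v v) := by
          ext s t
          cases s with
          | inl s => cases t with
            | inl t => simp [Matrix.submatrix_apply, heu]
            | inr t => simp [Matrix.submatrix_apply, heu, hev]
          | inr s => cases t with
            | inl t => simp [Matrix.submatrix_apply, heu, hev]
            | inr t => simp [Matrix.submatrix_apply, hev]
        -- run facts
        have hrunI : ∀ l : Fin p, (I (u l) : ℕ) = i0 + l := by
          intro l; exact (hrun (u l) l.isLt).1
        have hrunJ : ∀ l : Fin p, (J (u l) : ℕ) = i0 + l := by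
          intro l; exact (hrun (u l) l.isLt).2
        have hrange : i0 + p ≤ n := by
          have := (I k0).isLt
          omega
        -- the upper-left block is the contiguous principal block
        have hB11 : (A.submatrix u u).det = dd α β γ i0 p := by
          rw [hAdef, Matrix.submatrix_submatrix]
          have hIu : I ∘ u = blk n i0 p hrange := by
            funext l; exact Fin.ext (by simp [blk, hrunI l])
          have hJu : J ∘ u = blk n i0 p hrange := by
            funext l; exact Fin.ext (by simp [blk, hrunJ l])
          rw [hIu, hJu, hT, det_block]
        have hB11nn : 0 ≤ (A.submatrix u u).det := by
          rw [hB11]; exact hd i0 p (by omega) (by omega) hrange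
        -- the lower-right block is a smaller minor
        have hvmono : StrictMono v := by
          intro s t hst
          rw [Fin.lt_def] at hst ⊢
          simp only [hv]; omega
        have hB22nn : 0 ≤ (A.submatrix v v).det := by
          rw [hAdef, Matrix.submatrix_submatrix]
          exact IH q (by omega) (by omega) _ _ (hI.comp hvmono) (hJ.comp hvmono)
        rw [hdet, hblocks]
        rcases hbreak with hIb | hJb
        · -- lower-left block vanishes
          have hz : A.submatrix v u = 0 := by
            ext s t
            rw [Matrix.submatrix_apply, hAdef, Matrix.submatrix_apply]
            apply trid_far
            right
            have h1 : (J (u t) : ℕ) = i0 + t := hrunJ t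
            have h2 : (I k0 : ℕ) + (s:ℕ) ≤ (I (v s) : ℕ) := by
              have := gap_of_strictMono hI (s:ℕ) k0 (v s) (by simp [hv, hp])
              exact this
            have := t.isLt
            omega
          rw [hz, Matrix.det_fromBlocks_zero₂₁]
          exact mul_nonneg hB11nn hB22nn
        · -- upper-right block vanishes
          have hz : A.submatrix u v = 0 := by
            ext s t
            rw [Matrix.submatrix_apply, hAdef, Matrix.submatrix_apply]
            apply trid_far
            left
            have h1 : (I (u s) : ℕ) = i0 + s := hrunI s
            have h2 : (J k0 : ℕ) + (t:ℕ) ≤ (J (v t) : ℕ) := by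
              have := gap_of_strictMono hJ (t:ℕ) k0 (v t) (by simp [hv, hp])
              exact this
            have := s.isLt
            omega
          rw [hz, Matrix.det_fromBlocks_zero₁₂]
          exact mul_nonneg hB11nn hB22nn

/-- `tridiag` is a `trid`. -/
lemma tridiag_eq (n : ℕ) (a b : ℕ → ℝ) : tridiag n a b = trid n a b (fun _ => 1) := rfl

lemma det_trid (α β γ : ℕ → ℝ) : (trid n α β γ).det = dd α β γ 0 n := by
  have h : (0:ℕ) + n ≤ n := by omega
  rw [← det_block (n := n) α β γ n 0 h]
  congr 1
  have : blk n 0 n h = id := by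
    funext l; exact Fin.ext (by simp)
  rw [this, Matrix.submatrix_id_id]

lemma dd_one_zero (β : ℕ → ℝ) (i : ℕ) : ∀ m, dd (fun _ => 1) β (fun _ => 0) i m = 1 := by
  intro m
  induction m using Nat.strong_induction_on with
  | _ m IH =>
    match m with
    | 0 => rfl
    | 1 => rfl
    | (m+2) => rw [dd_two, IH (m+1) (by omega), IH m (by omega)]; ring

/-- `chevE` as a tridiagonal matrix. -/
lemma chevE_eq_trid (i : ℕ) (t : ℝ) :
    chevE n i t = trid n (fun _ => 1) (fun p => if p = i then t else 0) (fun _ => 0) := by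
  funext p q
  simp only [chevE, trid]
  by_cases h1 : (p:ℕ) = q
  · simp [h1]
  · by_cases h2 : (q:ℕ) = (p:ℕ)+1
    · by_cases h3 : (p:ℕ) = i
      · have : (p:ℕ) = i ∧ (q:ℕ) = i+1 := ⟨h3, by omega⟩
        simp [h1, h2, h3, this]
      · have : ¬((p:ℕ) = i ∧ (q:ℕ) = i+1) := by intro hc; exact h3 hc.1
        simp [h1, h2, h3, this]
    · have : ¬((p:ℕ) = i ∧ (q:ℕ) = i+1) := by intro hc; omega
      simp [h1, h2, this]

lemma chevE_transpose_eq_trid (i : ℕ) (t : ℝ) :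
    (chevE n i t)ᵀ = trid n (fun _ => 1) (fun _ => 0) (fun p => if p = i then t else 0) := by
  funext p q
  rw [Matrix.transpose_apply, chevE_eq_trid]
  by_cases h1 : (p:ℕ) = q
  · rw [trid_diag h1.symm, trid_diag h1]
  · by_cases h2 : (q:ℕ) = (p:ℕ)+1
    · rw [trid_sub h2, trid_super h2]
    · by_cases h3 : (p:ℕ) = (q:ℕ)+1
      · rw [trid_super h3, trid_sub h3]
      · rw [trid_far (by omega), trid_far (by omega)]

lemma chevE_nonneg (k i : ℕ) (t : ℝ) (ht : 0 ≤ t) : IsKNonneg k (chevE n i t) := by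
  rw [chevE_eq_trid]
  apply crit
  · intro p _; split <;> simp [ht]
  · intro p _; simp
  · intro i' m' _ _ _; rw [dd_one_zero]; norm_num

lemma chevE_transpose_nonneg (k i : ℕ) (t : ℝ) (ht : 0 ≤ t) :
    IsKNonneg k (chevE n i t)ᵀ := by
  rw [chevE_transpose_eq_trid]
  apply crit
  · intro p _; simp
  · intro p _; split <;> simp [ht]
  · intro i' m' _ _ _
    rw [dd_swap, dd_one_zero]; norm_num

lemma chevE_eq_one_add (i : ℕ) (h : i + 1 < n) (t : ℝ) :
    chevE n i t = 1 + Matrix.single (⟨i, by omega⟩ : Fin n) (⟨i+1, h⟩ : Fin n) t := by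
  funext p q
  simp only [Matrix.add_apply, Matrix.one_apply, Matrix.single, chevE, Matrix.of_apply]
  by_cases h1 : (p:ℕ) = q
  · have : p = q := Fin.ext h1
    subst this
    have hni : ¬((⟨i, by omega⟩ : Fin n) = p ∧ (⟨i+1, h⟩ : Fin n) = p) := by
      rintro ⟨ha, hb⟩
      have := congrArg Fin.val (ha.trans hb.symm)
      simp at this
    simp [h1, hni]
  · have hpq : ¬(p = q) := fun hc => h1 (congrArg Fin.val hc)
    by_cases h2 : (p:ℕ) = i ∧ (q:ℕ) = i+1
    · have hyes : (⟨i, by omega⟩ : Fin n) = p ∧ (⟨i+1, h⟩ : Fin n) = q :=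
        ⟨(Fin.ext h2.1).symm, (Fin.ext h2.2).symm⟩
      simp [h1, h2, hpq, hyes]
    · have hno : ¬((⟨i, by omega⟩ : Fin n) = p ∧ (⟨i+1, h⟩ : Fin n) = q) := by
        rintro ⟨ha, hb⟩
        exact h2 ⟨(congrArg Fin.val ha).symm, (congrArg Fin.val hb).symm⟩
      simp [h1, h2, hpq, hno]

lemma chevE_mul_chevE (i : ℕ) (h : i + 1 < n) (s u : ℝ) :
    chevE n i s * chevE n i u = chevE n i (s + u) := by
  rw [chevE_eq_one_add i h, chevE_eq_one_add i h, chevE_eq_one_add i h]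
  rw [add_mul, one_mul, mul_add, mul_one]
  rw [Matrix.single_mul_single_of_ne _ _ _ _ (by
    intro hc
    have := congrArg Fin.val hc
    simp at this) u]
  rw [add_zero, Matrix.single_add]
  abel

lemma chevE_zero (i : ℕ) (h : i + 1 < n) : chevE n i 0 = 1 := by
  rw [chevE_eq_one_add i h, Matrix.single_zero, add_zero]

lemma chevE_mul_neg (i : ℕ) (h : i + 1 < n) (t : ℝ) :
    chevE n i t * chevE n i (-t) = 1 := by
  rw [chevE_mul_chevE i h, add_neg_cancel, chevE_zero i h]

lemma chevE_isUnit (i : ℕ) (h : i + 1 < n) (t : ℝ) : IsUnit (chevE n i t) := by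
  refine ⟨⟨chevE n i t, chevE n i (-t), chevE_mul_neg i h t, ?_⟩, rfl⟩
  have := chevE_mul_neg (n := n) i h (-t)
  rwa [neg_neg] at this

lemma chevE_transpose_isUnit (i : ℕ) (h : i + 1 < n) (t : ℝ) : IsUnit (chevE n i t)ᵀ := by
  refine ⟨⟨(chevE n i t)ᵀ, (chevE n i (-t))ᵀ, ?_, ?_⟩, rfl⟩
  · rw [← Matrix.transpose_mul]
    have := chevE_mul_neg (n := n) i h (-t)
    rw [neg_neg] at this
    rw [this, Matrix.transpose_one]
  · rw [← Matrix.transpose_mul, chevE_mul_neg (n := n) i h, Matrix.transpose_one]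

lemma stdMul_left_apply (ii jj : Fin n) (c : ℝ) (T : Matrix (Fin n) (Fin n) ℝ) (p q : Fin n) :
    (Matrix.single ii jj c * T) p q = if ii = p then c * T jj q else 0 := by
  rw [Matrix.mul_apply]
  rw [Finset.sum_eq_single jj]
  · have : Matrix.single ii jj c p jj = if ii = p then c else 0 := by
      simp [Matrix.single]
    rw [this]
    split_ifs <;> simp
  · intro r _ hr
    have : Matrix.single ii jj c p r = 0 := by
      simp [Matrix.single]
      intro _ hc
      exact absurd hc.symm hr
    rw [this, zero_mul]
  · intro hmem; exact absurd (Finset.mem_univ _) hmem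

lemma stdMul_right_apply (ii jj : Fin n) (c : ℝ) (T : Matrix (Fin n) (Fin n) ℝ) (p q : Fin n) :
    (T * Matrix.single ii jj c) p q = if jj = q then T p ii * c else 0 := by
  rw [Matrix.mul_apply]
  rw [Finset.sum_eq_single ii]
  · have : Matrix.single ii jj c ii q = if jj = q then c else 0 := by
      simp [Matrix.single]
    rw [this]
    split_ifs <;> simp
  · intro r _ hr
    have : Matrix.single ii jj c r q = 0 := by
      simp [Matrix.single]
      intro hc
      exact absurd hc.symm hr
    rw [this, mul_zero]
  · intro hmem; exact absurd (Finset.mem_univ _) hmem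

lemma stdBasis_transpose (ii jj : Fin n) (c : ℝ) :
    (Matrix.single ii jj c)ᵀ = Matrix.single jj ii c := by
  funext p q
  simp [Matrix.single, and_comm]

lemma chevE_mul_apply (i : ℕ) (h : i+1 < n) (t : ℝ) (T : Matrix (Fin n) (Fin n) ℝ)
    (p q : Fin n) : (chevE n i t * T) p q
      = T p q + (if (p:ℕ) = i then t * T ⟨i+1, h⟩ q else 0) := by
  rw [chevE_eq_one_add i h, add_mul, one_mul, Matrix.add_apply,
    stdMul_left_apply]
  congr 1
  by_cases hp : (p:ℕ) = i
  · rw [if_pos (Fin.ext (by simpa using hp.symm)), if_pos hp]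
  · rw [if_neg (fun hc => hp (by simpa using congrArg Fin.val hc.symm)), if_neg hp]

lemma mul_chevE_apply (i : ℕ) (h : i+1 < n) (t : ℝ) (T : Matrix (Fin n) (Fin n) ℝ)
    (p q : Fin n) : (T * chevE n i t) p q
      = T p q + (if (q:ℕ) = i+1 then t * T p ⟨i, by omega⟩ else 0) := by
  rw [chevE_eq_one_add i h, mul_add, mul_one, Matrix.add_apply,
    stdMul_right_apply]
  congr 1
  by_cases hq : (q:ℕ) = i+1
  · rw [if_pos (Fin.ext (by simpa using hq.symm)), if_pos hq, mul_comm]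
  · rw [if_neg (fun hc => hq (by simpa using congrArg Fin.val hc.symm)), if_neg hq]

lemma chevET_mul_apply (i : ℕ) (h : i+1 < n) (t : ℝ) (T : Matrix (Fin n) (Fin n) ℝ)
    (p q : Fin n) : ((chevE n i t)ᵀ * T) p q
      = T p q + (if (p:ℕ) = i+1 then t * T ⟨i, by omega⟩ q else 0) := by
  rw [chevE_eq_one_add i h, Matrix.transpose_add, Matrix.transpose_one,
    stdBasis_transpose, add_mul, one_mul, Matrix.add_apply, stdMul_left_apply]
  congr 1
  by_cases hp : (p:ℕ) = i+1
  · rw [if_pos (Fin.ext (by simpa using hp.symm)), if_pos hp]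
  · rw [if_neg (fun hc => hp (by simpa using congrArg Fin.val hc.symm)), if_neg hp]

lemma mul_chevET_apply (i : ℕ) (h : i+1 < n) (t : ℝ) (T : Matrix (Fin n) (Fin n) ℝ)
    (p q : Fin n) : (T * (chevE n i t)ᵀ) p q
      = T p q + (if (q:ℕ) = i then t * T p ⟨i+1, h⟩ else 0) := by
  rw [chevE_eq_one_add i h, Matrix.transpose_add, Matrix.transpose_one,
    stdBasis_transpose, mul_add, mul_one, Matrix.add_apply, stdMul_right_apply]
  congr 1
  by_cases hq : (q:ℕ) = i
  · rw [if_pos (Fin.ext (by simpa using hq.symm)), if_pos hq, mul_comm]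
  · rw [if_neg (fun hc => hq (by simpa using congrArg Fin.val hc.symm)), if_neg hq]

/-- row operation `row (n-2) += c * row (n-1)`. -/
lemma rowop_last (hn : 2 ≤ n) (c : ℝ) (α β γ : ℕ → ℝ) :
    chevE n (n-2) c * trid n α β γ
      = trid n (Function.update α (n-2) (α (n-2) + c * γ (n-2)))
          (Function.update β (n-2) (β (n-2) + c * α (n-1))) γ := by
  have h : (n-2)+1 < n := by omega
  have hcoe : ((⟨n-2+1, h⟩ : Fin n) : ℕ) = n-1 := by simp; omega
  funext p q
  rw [chevE_mul_apply (n-2) h c]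
  by_cases hp : (p:ℕ) = n-2
  · rw [if_pos hp]
    by_cases q1 : (q:ℕ) = n-2
    · rw [trid_sub (p := (⟨n-2+1, h⟩ : Fin n)) (q := q) (by rw [hcoe]; omega),
        trid_diag (p := p) (q := q) (by omega),
        trid_diag (p := p) (q := q) (by omega), hp, q1, Function.update_self]
    · by_cases q2 : (q:ℕ) = n-1
      · rw [trid_diag (p := (⟨n-2+1, h⟩ : Fin n)) (q := q) (by rw [hcoe]; omega),
          trid_super (p := p) (q := q) (by omega),
          trid_super (p := p) (q := q) (by omega), hp, hcoe, Function.update_self]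
      · by_cases q3 : (p:ℕ) = (q:ℕ)+1
        · rw [trid_far (p := (⟨n-2+1, h⟩ : Fin n)) (q := q) (Or.inr (by rw [hcoe]; omega)),
            trid_sub (p := p) (q := q) q3, trid_sub (p := p) (q := q) q3]
          ring
        · have hqn := q.isLt
          rw [trid_far (p := (⟨n-2+1, h⟩ : Fin n)) (q := q) (Or.inr (by rw [hcoe]; omega)),
            trid_far (p := p) (q := q) (by omega), trid_far (p := p) (q := q) (by omega)]
          ring
  · rw [if_neg hp, add_zero]
    by_cases h1 : (p:ℕ) = q
    · rw [trid_diag (p := p) (q := q) h1, trid_diag (p := p) (q := q) h1,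
        Function.update_of_ne hp]
    · by_cases h2 : (q:ℕ) = (p:ℕ)+1
      · rw [trid_super (p := p) (q := q) h2, trid_super (p := p) (q := q) h2,
          Function.update_of_ne hp]
      · by_cases h3 : (p:ℕ) = (q:ℕ)+1
        · rw [trid_sub (p := p) (q := q) h3, trid_sub (p := p) (q := q) h3]
        · rw [trid_far (p := p) (q := q) (by omega), trid_far (p := p) (q := q) (by omega)]

/-- row operation `row 1 += c * row 0`. -/
lemma rowop_first (hn : 2 ≤ n) (c : ℝ) (α β γ : ℕ → ℝ) :
    (chevE n 0 c)ᵀ * trid n α β γ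
      = trid n (Function.update α 1 (α 1 + c * β 0)) β
          (Function.update γ 0 (γ 0 + c * α 0)) := by
  have h : 0+1 < n := by omega
  have hcoe : ((⟨0, by omega⟩ : Fin n) : ℕ) = 0 := rfl
  funext p q
  rw [chevET_mul_apply 0 h c]
  by_cases hp : (p:ℕ) = 0+1
  · rw [if_pos hp]
    by_cases q1 : (q:ℕ) = 0
    · rw [trid_diag (p := (⟨0, by omega⟩ : Fin n)) (q := q) (by rw [hcoe]; omega),
        trid_sub (p := p) (q := q) (by omega), trid_sub (p := p) (q := q) (by omega),
        hcoe, q1, Function.update_self]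
    · by_cases q2 : (q:ℕ) = 1
      · rw [trid_super (p := (⟨0, by omega⟩ : Fin n)) (q := q) (by rw [hcoe]; omega),
          trid_diag (p := p) (q := q) (by omega), trid_diag (p := p) (q := q) (by omega),
          hp, hcoe, Function.update_self]
      · by_cases q3 : (q:ℕ) = (p:ℕ)+1
        · rw [trid_far (p := (⟨0, by omega⟩ : Fin n)) (q := q) (Or.inl (by rw [hcoe]; omega)),
            trid_super (p := p) (q := q) q3, trid_super (p := p) (q := q) q3]
          ring
        · rw [trid_far (p := (⟨0, by omega⟩ : Fin n)) (q := q) (by rw [hcoe]; omega),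
            trid_far (p := p) (q := q) (by omega), trid_far (p := p) (q := q) (by omega)]
          ring
  · rw [if_neg hp, add_zero]
    by_cases h1 : (p:ℕ) = q
    · rw [trid_diag (p := p) (q := q) h1, trid_diag (p := p) (q := q) h1,
        Function.update_of_ne (by omega)]
    · by_cases h2 : (q:ℕ) = (p:ℕ)+1
      · rw [trid_super (p := p) (q := q) h2, trid_super (p := p) (q := q) h2]
      · by_cases h3 : (p:ℕ) = (q:ℕ)+1
        · rw [trid_sub (p := p) (q := q) h3, trid_sub (p := p) (q := q) h3,
            Function.update_of_ne (by omega)]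
        · rw [trid_far (p := p) (q := q) (by omega), trid_far (p := p) (q := q) (by omega)]

/-- column operation `col 1 += c * col 0`. -/
lemma colop_first (hn : 2 ≤ n) (c : ℝ) (α β γ : ℕ → ℝ) :
    trid n α β γ * chevE n 0 c
      = trid n (Function.update α 1 (α 1 + c * γ 0))
          (Function.update β 0 (β 0 + c * α 0)) γ := by
  have h : 0+1 < n := by omega
  have hcoe : ((⟨0, by omega⟩ : Fin n) : ℕ) = 0 := rfl
  funext p q
  rw [mul_chevE_apply 0 h c]
  by_cases hq : (q:ℕ) = 0+1
  · rw [if_pos hq]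
    by_cases p1 : (p:ℕ) = 0
    · rw [trid_diag (p := p) (q := (⟨0, by omega⟩ : Fin n)) (by rw [hcoe]; omega),
        trid_super (p := p) (q := q) (by omega), trid_super (p := p) (q := q) (by omega),
        p1, Function.update_self]
    · by_cases p2 : (p:ℕ) = 1
      · rw [trid_sub (p := p) (q := (⟨0, by omega⟩ : Fin n)) (by rw [hcoe]; omega),
          trid_diag (p := p) (q := q) (by omega), trid_diag (p := p) (q := q) (by omega),
          p2, hcoe, Function.update_self]
      · by_cases p3 : (p:ℕ) = (q:ℕ)+1
        · rw [trid_far (p := p) (q := (⟨0, by omega⟩ : Fin n)) (Or.inr (by rw [hcoe]; omega)),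
            trid_sub (p := p) (q := q) p3, trid_sub (p := p) (q := q) p3]
          ring
        · rw [trid_far (p := p) (q := (⟨0, by omega⟩ : Fin n)) (by rw [hcoe]; omega),
            trid_far (p := p) (q := q) (by omega), trid_far (p := p) (q := q) (by omega)]
          ring
  · rw [if_neg hq, add_zero]
    by_cases h1 : (p:ℕ) = q
    · rw [trid_diag (p := p) (q := q) h1, trid_diag (p := p) (q := q) h1,
        Function.update_of_ne (by omega)]
    · by_cases h2 : (q:ℕ) = (p:ℕ)+1
      · rw [trid_super (p := p) (q := q) h2, trid_super (p := p) (q := q) h2,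
          Function.update_of_ne (by omega)]
      · by_cases h3 : (p:ℕ) = (q:ℕ)+1
        · rw [trid_sub (p := p) (q := q) h3, trid_sub (p := p) (q := q) h3]
        · rw [trid_far (p := p) (q := q) (by omega), trid_far (p := p) (q := q) (by omega)]

/-- column operation `col (n-2) += c * col (n-1)`. -/
lemma colop_last (hn : 2 ≤ n) (c : ℝ) (α β γ : ℕ → ℝ) :
    trid n α β γ * (chevE n (n-2) c)ᵀ
      = trid n (Function.update α (n-2) (α (n-2) + c * β (n-2))) β
          (Function.update γ (n-2) (γ (n-2) + c * α (n-1))) := by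
  have h : (n-2)+1 < n := by omega
  have hcoe : ((⟨n-2+1, h⟩ : Fin n) : ℕ) = n-1 := by simp; omega
  funext p q
  rw [mul_chevET_apply (n-2) h c]
  by_cases hq : (q:ℕ) = n-2
  · rw [if_pos hq]
    by_cases p1 : (p:ℕ) = n-2
    · rw [trid_super (p := p) (q := (⟨n-2+1, h⟩ : Fin n)) (by rw [hcoe]; omega),
        trid_diag (p := p) (q := q) (by omega), trid_diag (p := p) (q := q) (by omega),
        p1, Function.update_self]
    · by_cases p2 : (p:ℕ) = n-1
      · rw [trid_diag (p := p) (q := (⟨n-2+1, h⟩ : Fin n)) (by rw [hcoe]; omega),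
          trid_sub (p := p) (q := q) (by omega), trid_sub (p := p) (q := q) (by omega),
          p2, hq, Function.update_self]
      · by_cases p3 : (q:ℕ) = (p:ℕ)+1
        · rw [trid_far (p := p) (q := (⟨n-2+1, h⟩ : Fin n)) (Or.inl (by rw [hcoe]; omega)),
            trid_super (p := p) (q := q) p3, trid_super (p := p) (q := q) p3]
          ring
        · have hpn := p.isLt
          rw [trid_far (p := p) (q := (⟨n-2+1, h⟩ : Fin n)) (by rw [hcoe]; omega),
            trid_far (p := p) (q := q) (by omega), trid_far (p := p) (q := q) (by omega)]
          ring
  · rw [if_neg hq, add_zero]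
    by_cases h1 : (p:ℕ) = q
    · rw [trid_diag (p := p) (q := q) h1, trid_diag (p := p) (q := q) h1,
        Function.update_of_ne (by omega)]
    · by_cases h2 : (q:ℕ) = (p:ℕ)+1
      · rw [trid_super (p := p) (q := q) h2, trid_super (p := p) (q := q) h2]
      · by_cases h3 : (p:ℕ) = (q:ℕ)+1
        · rw [trid_sub (p := p) (q := q) h3, trid_sub (p := p) (q := q) h3,
            Function.update_of_ne hq]
        · rw [trid_far (p := p) (q := q) (by omega), trid_far (p := p) (q := q) (by omega)]

/-! ### The positivity table under the minor-form hypotheses -/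

abbrev one : ℕ → ℝ := fun _ => 1

lemma pos_of_mul_pos_left {x y : ℝ} (h : 0 < x * y) (hx : 0 < x) : 0 < y := by
  nlinarith

end

section
variable {a b : ℕ → ℝ} {n : ℕ}

lemma prodb_pos (hb : ∀ t, t + 1 < n → 0 < b t) (i m : ℕ) (h : i + m < n) :
    0 < ∏ t ∈ Finset.range m, (one (i+t) * b (i+t)) := by
  apply Finset.prod_pos
  intro t ht
  have := Finset.mem_range.mp ht
  have : 0 < b (i+t) := hb (i+t) (by omega)
  simpa [one]

/-- one inductive step between consecutive rows of the table. -/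
lemma table_step (hb : ∀ t, t + 1 < n → 0 < b t) {i S : ℕ} (hS : i + S + 1 ≤ n)
    (h0 : ∀ s, s ≤ S → 0 ≤ dd a b one i (s+1)) (hpos : ∀ s, s ≤ S → 0 < dd a b one i s) :
    ∀ s, s ≤ S → 0 < dd a b one (i+1) s := by
  intro s
  induction s using Nat.strong_induction_on with
  | _ s IH =>
    match s with
    | 0 => intro _; norm_num
    | (s+1) =>
      intro hsS
      have hDJ := dd_DJ (α := a) (β := b) (γ := one) i s
      have hB : 0 < ∏ t ∈ Finset.range (s+1), (one (i+t) * b (i+t)) :=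
        prodb_pos hb i (s+1) (by omega)
      have h1 : 0 ≤ dd a b one i (s+2) := by
        have := h0 (s+1) hsS; exact this
      have h2 : 0 < dd a b one (i+1) s := IH s (by omega) (by omega)
      have h3 : 0 < dd a b one i (s+1) := hpos (s+1) hsS
      have key : 0 < dd a b one i (s+1) * dd a b one (i+1) (s+1) := by nlinarith
      exact pos_of_mul_pos_left key h3

/-- Minor-form hypotheses. -/
structure MF (a b : ℕ → ℝ) (n : ℕ) : Prop where
  hn : 2 ≤ n
  hb : ∀ t, t + 1 < n → 0 < b t
  hD : ∀ m, m ≤ n-2 → 0 < dd a b one 0 m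
  hD0 : dd a b one 0 (n-1) = 0
  hE0 : dd a b one 1 (n-1) = 0

namespace MF

variable (hmf : MF a b n)
include hmf

lemma row1 : ∀ s, s ≤ n-2 → 0 < dd a b one 1 s := by
  have hn2 := hmf.hn
  have := table_step (a := a) hmf.hb (i := 0) (S := n-2) (by omega)
    (fun s hs => ?_) (fun s hs => hmf.hD s hs)
  · exact this
  · rcases Nat.lt_or_ge (s+1) (n-1) with h | h
    · exact le_of_lt (hmf.hD (s+1) (by omega))
    · have : s + 1 = n-1 := by omega
      rw [this, hmf.hD0]

lemma row2 : ∀ s, s ≤ n-2 → 0 < dd a b one 2 s := by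
  have hn2 := hmf.hn
  have := table_step (a := a) hmf.hb (i := 1) (S := n-2) (by omega)
    (fun s hs => ?_) (fun s hs => hmf.row1 s hs)
  · exact this
  · rcases Nat.lt_or_ge (s+1) (n-1) with h | h
    · exact le_of_lt (hmf.row1 (s+1) (by omega))
    · have : s + 1 = n-1 := by omega
      rw [this, hmf.hE0]

lemma rowi : ∀ i, 2 ≤ i → ∀ s, i + s ≤ n → 0 < dd a b one i s := by
  have hn2 := hmf.hn
  intro i
  induction i with
  | zero => omega
  | succ i IH =>
    intro hi s hs
    rcases Nat.lt_or_ge i 2 with h2 | h2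
    · have : i = 1 := by omega
      subst this
      exact hmf.row2 s (by omega)
    · exact table_step (a := a) hmf.hb (i := i) (S := n - i - 1) (by omega)
        (fun s' hs' => le_of_lt (IH (by omega) (s'+1) (by omega)))
        (fun s' hs' => IH (by omega) s' (by omega)) s (by omega)

/-- all blocks relevant to `(n-1)`-nonnegativity are nonnegative. -/
lemma blocks_nonneg : ∀ i m, m ≤ n-1 → i + m ≤ n → 0 ≤ dd a b one i m := by
  have hn2 := hmf.hn
  intro i m hm him
  match i with
  | 0 =>
    rcases Nat.lt_or_ge m (n-1) with h | h
    · exact le_of_lt (hmf.hD m (by omega))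
    · have : m = n-1 := by omega
      rw [this, hmf.hD0]
  | 1 =>
    rcases Nat.lt_or_ge m (n-1) with h | h
    · exact le_of_lt (hmf.row1 m (by omega))
    · have : m = n-1 := by omega
      rw [this, hmf.hE0]
  | (i+2) => exact le_of_lt (hmf.rowi (i+2) (by omega) m him)

lemma det_neg : dd a b one 0 n < 0 := by
  have hn2 := hmf.hn
  have hDJ := dd_DJ (α := a) (β := b) (γ := one) 0 (n-2)
  rw [show n-2+2 = n by omega, show n-2+1 = n-1 by omega] at hDJ
  simp only [zero_add] at hDJ
  rw [hmf.hD0, hmf.hE0] at hDJ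
  have hB : 0 < ∏ t ∈ Finset.range (n-1), (one (0+t) * b (0+t)) := by
    exact prodb_pos (n := n) hmf.hb 0 (n-1) (by omega)
  simp only [zero_mul, zero_sub] at hDJ
  simp only [zero_add] at hB hDJ
  have hq : 0 < dd a b one 1 (n-2) := hmf.row1 (n-2) (le_refl _)
  nlinarith [hDJ, hB, hq]

lemma m_nonneg : IsKNonneg (n-1) (tridiag n a b) := by
  rw [tridiag_eq]
  apply crit
  · intro p hp; exact le_of_lt (hmf.hb p hp)
  · intro p _; norm_num [one]
  · intro i m h1 h2 h3
    exact hmf.blocks_nonneg i m h2 h3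

lemma m_unit : IsUnit (tridiag n a b) := by
  rw [Matrix.isUnit_iff_isUnit_det, isUnit_iff_ne_zero, tridiag_eq, det_trid]
  exact ne_of_lt hmf.det_neg

end MF

end

section

lemma strictMono_fin_one {n : ℕ} {f : Fin 1 → Fin n} : StrictMono f := by
  intro u v huv
  have : u = v := Subsingleton.elim u v
  exact absurd (this ▸ huv) (lt_irrefl _)

lemma nonneg_entry_of_isKNonneg {n k : ℕ} {X : Matrix (Fin n) (Fin n) ℝ}
    (h : IsKNonneg k X) (hk : 1 ≤ k) (p q : Fin n) : 0 ≤ X p q := by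
  have := h 1 hk (fun _ => p) (fun _ => q) strictMono_fin_one strictMono_fin_one
  rwa [Matrix.det_fin_one, Matrix.submatrix_apply] at this

lemma nonneg_block_of_isKNonneg {n k : ℕ} {X : Matrix (Fin n) (Fin n) ℝ}
    (h : IsKNonneg k X) {i m : ℕ} (hm : m ≤ k) (hr : i + m ≤ n) :
    0 ≤ (X.submatrix (blk n i m hr) (blk n i m hr)).det :=
  h m hm _ _ (blk_strictMono hr) (blk_strictMono hr)

section
variable {a b : ℕ → ℝ} {n : ℕ}

namespace MF

variable (hmf : MF a b n)
include hmf

lemma not_nonneg_eL {i : ℕ} (hi : i+1 < n) {t : ℝ} (ht : 0 < t) :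
    ¬ IsKNonneg (n-1) (chevE n i (-t) * tridiag n a b) := by
  have hn2 := hmf.hn
  intro hnn
  by_cases hcor : i = n-2
  · subst hcor
    have heq : chevE n (n-2) (-t) * tridiag n a b
        = trid n (Function.update a (n-2) (a (n-2) + (-t) * one (n-2)))
            (Function.update b (n-2) (b (n-2) + (-t) * a (n-1))) one := by
      rw [tridiag_eq]; exact rowop_last hn2 (-t) a b one
    have hblock := nonneg_block_of_isKNonneg hnn (i := 0) (m := n-1)
      (le_refl _) (by omega)
    rw [heq, det_block] at hblock
    have e1 : dd (Function.update a (n-2) (a (n-2) + (-t) * one (n-2)))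
        (Function.update b (n-2) (b (n-2) + (-t) * a (n-1))) one 0 (n-1)
        = dd (Function.update a (n-2) (a (n-2) + (-t) * one (n-2))) b one 0 (n-1) := by
      apply dd_congr
      · intro _ _; rfl
      · intro t' ht'
        rw [Function.update_of_ne (by omega)]
    have e2 : dd (Function.update a (n-2) (a (n-2) + (-t) * one (n-2))) b one 0 (n-1)
        = dd a b one 0 (n-1) + (-t * one (n-2)) * dd a b one 0 (n-2) := by
      have := dd_shift_last (β := b) (γ := one)
        (α' := Function.update a (n-2) (a (n-2) + (-t) * one (n-2))) 0 (-t * one (n-2))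
        (n-1) (by omega) (fun t' ht' => Function.update_of_ne (by omega) _ _)
        (by rw [show 0+(n-1)-1 = n-2 by omega, Function.update_self])
      rwa [show n-1-1 = n-2 by omega] at this
    rw [e1, e2, hmf.hD0] at hblock
    have hq : 0 < dd a b one 0 (n-2) := hmf.hD (n-2) (le_refl _)
    simp only [one] at hblock
    nlinarith [mul_pos ht hq]
  · -- i ≤ n-3 : a negative entry appears
    have hi3 : i + 2 < n := by omega
    have hent := nonneg_entry_of_isKNonneg hnn (by omega)
      (⟨i, by omega⟩ : Fin n) (⟨i+2, hi3⟩ : Fin n)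
    rw [chevE_mul_apply i hi, if_pos (by simp)] at hent
    rw [tridiag_eq, trid_far (by left; simp),
      trid_super (by simp)] at hent
    have hb1 := hmf.hb (i+1) (by omega)
    nlinarith [mul_pos ht hb1]

lemma not_nonneg_fL {i : ℕ} (hi : i+1 < n) {t : ℝ} (ht : 0 < t) :
    ¬ IsKNonneg (n-1) ((chevE n i (-t))ᵀ * tridiag n a b) := by
  have hn2 := hmf.hn
  intro hnn
  by_cases hcor : i = 0
  · subst hcor
    have heq : (chevE n 0 (-t))ᵀ * tridiag n a b
        = trid n (Function.update a 1 (a 1 + (-t) * b 0)) b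
            (Function.update one 0 (one 0 + (-t) * a 0)) := by
      rw [tridiag_eq]; exact rowop_first hn2 (-t) a b one
    have hblock := nonneg_block_of_isKNonneg hnn (i := 1) (m := n-1)
      (le_refl _) (by omega)
    rw [heq, det_block] at hblock
    have e1 : dd (Function.update a 1 (a 1 + (-t) * b 0)) b
        (Function.update one 0 (one 0 + (-t) * a 0)) 1 (n-1)
        = dd (Function.update a 1 (a 1 + (-t) * b 0)) b one 1 (n-1) := by
      apply dd_congr
      · intro _ _; rfl
      · intro t' ht'
        rw [Function.update_of_ne (by omega)]
    have e2 : dd (Function.update a 1 (a 1 + (-t) * b 0)) b one 1 (n-1)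
        = dd a b one 1 (n-1) + (-t * b 0) * dd a b one 2 (n-2) := by
      have := dd_shift_first (β := b) (γ := one)
        (α' := Function.update a 1 (a 1 + (-t) * b 0)) 1 (-t * b 0)
        (fun t' ht' => Function.update_of_ne (by omega) _ _)
        (by rw [Function.update_self]) (n-1) (by omega)
      rwa [show (1:ℕ)+1 = 2 from rfl, show n-1-1 = n-2 by omega] at this
    rw [e1, e2, hmf.hE0] at hblock
    have hq : 0 < dd a b one 2 (n-2) := hmf.rowi 2 (le_refl _) (n-2) (by omega)
    have hb0 := hmf.hb 0 (by omega)
    nlinarith [mul_pos (mul_pos ht hb0) hq]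
  · have hi1 : i + 1 < n := hi
    have hent := nonneg_entry_of_isKNonneg hnn (by omega)
      (⟨i+1, hi1⟩ : Fin n) (⟨i-1, by omega⟩ : Fin n)
    rw [chevET_mul_apply i hi, if_pos (by simp)] at hent
    rw [tridiag_eq, trid_far (by right; simp; omega),
      trid_sub (by simp; omega)] at hent
    simp only [zero_add] at hent
    nlinarith

lemma not_nonneg_eR {i : ℕ} (hi : i+1 < n) {t : ℝ} (ht : 0 < t) :
    ¬ IsKNonneg (n-1) (tridiag n a b * chevE n i (-t)) := by
  have hn2 := hmf.hn
  intro hnn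
  by_cases hcor : i = 0
  · subst hcor
    have heq : tridiag n a b * chevE n 0 (-t)
        = trid n (Function.update a 1 (a 1 + (-t) * one 0))
            (Function.update b 0 (b 0 + (-t) * a 0)) one := by
      rw [tridiag_eq]; exact colop_first hn2 (-t) a b one
    have hblock := nonneg_block_of_isKNonneg hnn (i := 1) (m := n-1)
      (le_refl _) (by omega)
    rw [heq, det_block] at hblock
    have e1 : dd (Function.update a 1 (a 1 + (-t) * one 0))
        (Function.update b 0 (b 0 + (-t) * a 0)) one 1 (n-1)
        = dd (Function.update a 1 (a 1 + (-t) * one 0)) b one 1 (n-1) := by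
      apply dd_congr
      · intro _ _; rfl
      · intro t' ht'
        rw [Function.update_of_ne (by omega)]
    have e2 : dd (Function.update a 1 (a 1 + (-t) * one 0)) b one 1 (n-1)
        = dd a b one 1 (n-1) + (-t * one 0) * dd a b one 2 (n-2) := by
      have := dd_shift_first (β := b) (γ := one)
        (α' := Function.update a 1 (a 1 + (-t) * one 0)) 1 (-t * one 0)
        (fun t' ht' => Function.update_of_ne (by omega) _ _)
        (by rw [Function.update_self]) (n-1) (by omega)
      rwa [show (1:ℕ)+1 = 2 from rfl, show n-1-1 = n-2 by omega] at this
    rw [e1, e2, hmf.hE0] at hblock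
    have hq : 0 < dd a b one 2 (n-2) := hmf.rowi 2 (le_refl _) (n-2) (by omega)
    simp only [one] at hblock
    nlinarith [mul_pos ht hq]
  · have hent := nonneg_entry_of_isKNonneg hnn (by omega)
      (⟨i-1, by omega⟩ : Fin n) (⟨i+1, hi⟩ : Fin n)
    rw [mul_chevE_apply i hi, if_pos (by simp)] at hent
    rw [tridiag_eq, trid_far (by left; simp; omega),
      trid_super (by simp; omega)] at hent
    have hb1 := hmf.hb (i-1) (by omega)
    nlinarith [mul_pos ht hb1]

lemma not_nonneg_fR {i : ℕ} (hi : i+1 < n) {t : ℝ} (ht : 0 < t) :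
    ¬ IsKNonneg (n-1) (tridiag n a b * (chevE n i (-t))ᵀ) := by
  have hn2 := hmf.hn
  intro hnn
  by_cases hcor : i = n-2
  · subst hcor
    have heq : tridiag n a b * (chevE n (n-2) (-t))ᵀ
        = trid n (Function.update a (n-2) (a (n-2) + (-t) * b (n-2))) b
            (Function.update one (n-2) (one (n-2) + (-t) * a (n-1))) := by
      rw [tridiag_eq]; exact colop_last hn2 (-t) a b one
    have hblock := nonneg_block_of_isKNonneg hnn (i := 0) (m := n-1)
      (le_refl _) (by omega)
    rw [heq, det_block] at hblock
    have e1 : dd (Function.update a (n-2) (a (n-2) + (-t) * b (n-2))) b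
        (Function.update one (n-2) (one (n-2) + (-t) * a (n-1))) 0 (n-1)
        = dd (Function.update a (n-2) (a (n-2) + (-t) * b (n-2))) b one 0 (n-1) := by
      apply dd_congr
      · intro _ _; rfl
      · intro t' ht'
        rw [Function.update_of_ne (by omega)]
    have e2 : dd (Function.update a (n-2) (a (n-2) + (-t) * b (n-2))) b one 0 (n-1)
        = dd a b one 0 (n-1) + (-t * b (n-2)) * dd a b one 0 (n-2) := by
      have := dd_shift_last (β := b) (γ := one)
        (α' := Function.update a (n-2) (a (n-2) + (-t) * b (n-2))) 0 (-t * b (n-2))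
        (n-1) (by omega) (fun t' ht' => Function.update_of_ne (by omega) _ _)
        (by rw [show 0+(n-1)-1 = n-2 by omega, Function.update_self])
      rwa [show n-1-1 = n-2 by omega] at this
    rw [e1, e2, hmf.hD0] at hblock
    have hq : 0 < dd a b one 0 (n-2) := hmf.hD (n-2) (le_refl _)
    have hbn := hmf.hb (n-2) (by omega)
    nlinarith [mul_pos (mul_pos ht hbn) hq]
  · have hi3 : i + 2 < n := by omega
    have hent := nonneg_entry_of_isKNonneg hnn (by omega)
      (⟨i+2, hi3⟩ : Fin n) (⟨i, by omega⟩ : Fin n)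
    rw [mul_chevET_apply i hi, if_pos (by simp)] at hent
    rw [tridiag_eq, trid_far (by right; simp),
      trid_sub (by simp)] at hent
    simp only [zero_add] at hent
    nlinarith

lemma m_irred : KIrreducible (n-1) (tridiag n a b) := by
  have hn2 := hmf.hn
  intro R S hRu hSu hRnn hSnn hM
  constructor
  · rintro ⟨i, t, hin, ht, rfl | rfl⟩
    · have hSeq : S = chevE n i (-t) * tridiag n a b := by
        rw [hM, ← Matrix.mul_assoc]
        rw [show chevE n i (-t) * chevE n i t = 1 from by
          have := chevE_mul_neg (n := n) i hin (-t); rwa [neg_neg] at this]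
        rw [Matrix.one_mul]
      exact hmf.not_nonneg_eL hin ht (hSeq ▸ hSnn)
    · have hSeq : S = (chevE n i (-t))ᵀ * tridiag n a b := by
        rw [hM, ← Matrix.mul_assoc, ← Matrix.transpose_mul]
        rw [show chevE n i t * chevE n i (-t) = 1 from chevE_mul_neg (n := n) i hin t]
        rw [Matrix.transpose_one, Matrix.one_mul]
      exact hmf.not_nonneg_fL hin ht (hSeq ▸ hSnn)
  · rintro ⟨i, t, hin, ht, rfl | rfl⟩
    · have hReq : R = tridiag n a b * chevE n i (-t) := by
        rw [hM, Matrix.mul_assoc]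
        rw [show chevE n i t * chevE n i (-t) = 1 from chevE_mul_neg (n := n) i hin t]
        rw [Matrix.mul_one]
      exact hmf.not_nonneg_eR hin ht (hReq ▸ hRnn)
    · have hReq : R = tridiag n a b * (chevE n i (-t))ᵀ := by
        rw [hM, Matrix.mul_assoc, ← Matrix.transpose_mul]
        rw [show chevE n i (-t) * chevE n i t = 1 from by
          have := chevE_mul_neg (n := n) i hin (-t); rwa [neg_neg] at this]
        rw [Matrix.transpose_one, Matrix.mul_one]
      exact hmf.not_nonneg_fR hin ht (hReq ▸ hRnn)

end MF

end

section
variable {a b : ℕ → ℝ} {n : ℕ}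

lemma det_chevE (i : ℕ) (s : ℝ) : (chevE n i s).det = 1 := by
  rw [chevE_eq_trid, det_trid, dd_one_zero]

lemma det_chevET (i : ℕ) (s : ℝ) : ((chevE n i s)ᵀ).det = 1 := by
  rw [Matrix.det_transpose, det_chevE]

/-- Forward direction: the minor-form conditions follow from
invertibility + `(n-1)`-nonnegativity + `(n-1)`-irreducibility. -/
lemma mf_of_lhs (hn : 2 ≤ n) (ha : ∀ i, i < n → a i ≠ 0) (hbne : ∀ i, i+1 < n → b i ≠ 0)
    (hu : IsUnit (tridiag n a b)) (hnn : IsKNonneg (n-1) (tridiag n a b))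
    (hirr : KIrreducible (n-1) (tridiag n a b)) : MF a b n := by
  have hdet : (tridiag n a b).det ≠ 0 := by
    rw [Matrix.isUnit_iff_isUnit_det, isUnit_iff_ne_zero] at hu
    exact hu
  have hnn' : IsKNonneg (n-1) (trid n a b one) := by
    rw [tridiag_eq] at hnn; exact hnn
  have hdd : ∀ i m, m ≤ n-1 → i + m ≤ n → 0 ≤ dd a b one i m := by
    intro i m hm hr
    have := nonneg_block_of_isKNonneg hnn' hm hr
    rwa [det_block] at this
  have ha' : ∀ i, i < n → 0 < a i := by
    intro i hi
    have h1 := hdd i 1 (by omega) (by omega)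
    simp only [dd_one] at h1
    exact lt_of_le_of_ne h1 (Ne.symm (ha i hi))
  have hb' : ∀ i, i+1 < n → 0 < b i := by
    intro i hi
    have h1 := nonneg_entry_of_isKNonneg hnn (by omega) (⟨i, by omega⟩ : Fin n) ⟨i+1, hi⟩
    rw [tridiag_eq, trid_super (by simp)] at h1
    exact lt_of_le_of_ne h1 (Ne.symm (hbne i hi))
  have hstrict : ∀ i m, m ≤ n-2 → i + m ≤ n → 0 < dd a b one i m := by
    intro i m
    match m with
    | 0 => intro _ _; norm_num
    | (m+1) =>
      intro hm hr
      have h0 := hdd i (m+1) (by omega) (by omega)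
      rcases lt_or_eq_of_le h0 with hlt | heq
      · exact hlt
      · exfalso
        rcases Nat.lt_or_ge (i + (m+1)) n with hlt2 | hge
        · have hDJ := dd_DJ (α := a) (β := b) (γ := one) i m
          have hB := prodb_pos hb' i (m+1) (by omega)
          have h1 := hdd i (m+2) (by omega) (by omega)
          have h2 := hdd (i+1) m (by omega) (by omega)
          rw [← heq, zero_mul, zero_sub] at hDJ
          linarith [mul_nonneg h1 h2]
        · have hi2 : 2 ≤ i := by omega
          have hDJ := dd_DJ (α := a) (β := b) (γ := one) (i-1) m
          rw [show i-1+1 = i by omega] at hDJ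
          have hB := prodb_pos hb' (i-1) (m+1) (by omega)
          have h1 := hdd (i-1) (m+2) (by omega) (by omega)
          have h2 := hdd i m (by omega) (by omega)
          rw [← heq, mul_zero, zero_sub] at hDJ
          linarith [mul_nonneg h1 h2]
  have hD0 : dd a b one 0 (n-1) = 0 := by
    by_contra hne0
    have hpos : 0 < dd a b one 0 (n-1) :=
      lt_of_le_of_ne (hdd 0 (n-1) (le_refl _) (by omega)) (Ne.symm hne0)
    have hrne : (Finset.range (n-1)).Nonempty := ⟨0, Finset.mem_range.mpr (by omega)⟩
    set f : ℕ → ℝ := fun i => dd a b one i (n-1-i) / dd a b one i (n-2-i) with hf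
    set t : ℝ := min ((Finset.range (n-1)).inf' hrne f) (b (n-2) / a (n-1)) with htdef
    have hfpos : ∀ i ∈ Finset.range (n-1), 0 < f i := by
      intro i hi
      have hi' := Finset.mem_range.mp hi
      apply div_pos
      · rcases Nat.eq_zero_or_pos i with rfl | hip
        · rw [show n-1-0 = n-1 by omega]; exact hpos
        · exact hstrict i (n-1-i) (by omega) (by omega)
      · exact hstrict i (n-2-i) (by omega) (by omega)
    have ht : 0 < t := by
      apply lt_min
      · exact (Finset.lt_inf'_iff hrne).mpr hfpos
      · exact div_pos (hb' (n-2) (by omega)) (ha' (n-1) (by omega))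
    have htf : ∀ i, i < n-1 → t * dd a b one i (n-2-i) ≤ dd a b one i (n-1-i) := by
      intro i hi
      have h1 : t ≤ f i :=
        le_trans (min_le_left _ _) (Finset.inf'_le f (Finset.mem_range.mpr hi))
      have h2 : 0 < dd a b one i (n-2-i) := hstrict i (n-2-i) (by omega) (by omega)
      rw [hf] at h1
      exact (le_div_iff₀ h2).mp h1
    have htb : t * a (n-1) ≤ b (n-2) :=
      (le_div_iff₀ (ha' (n-1) (by omega))).mp (min_le_right _ _)
    set A' := Function.update a (n-2) (a (n-2) + (-t) * one (n-2)) with hA'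
    set B' := Function.update b (n-2) (b (n-2) + (-t) * a (n-1)) with hB'
    have heq : chevE n (n-2) (-t) * tridiag n a b = trid n A' B' one := by
      rw [tridiag_eq]; exact rowop_last hn (-t) a b one
    have hSnn : IsKNonneg (n-1) (trid n A' B' one) := by
      apply crit
      · intro p hp
        by_cases hpn : p = n-2
        · subst hpn
          rw [hB', Function.update_self]
          nlinarith [htb]
        · rw [hB', Function.update_of_ne hpn]
          exact le_of_lt (hb' p hp)
      · intro p _; norm_num [one]
      · intro i m h1m hmk hr
        rcases Nat.lt_or_ge (i+m) (n-1) with hc1 | hc1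
        · have hcon : dd A' B' one i m = dd a b one i m := by
            apply dd_congr
            · intro t' ht'; rw [hA', Function.update_of_ne (by omega)]
            · intro t' ht'; rw [hB', Function.update_of_ne (by omega)]
          rw [hcon]
          exact le_of_lt (hstrict i m (by omega) hr)
        rcases Nat.eq_or_lt_of_le hc1 with hc2 | hc2
        · have e1 : dd A' B' one i m = dd A' b one i m :=
            dd_congr _ _ (fun _ _ => rfl)
              (fun t' ht' => by rw [hB', Function.update_of_ne (by omega)])
          have e2 : dd A' b one i m
              = dd a b one i m + (-t * one (n-2)) * dd a b one i (m-1) := by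
            exact dd_shift_last (β := b) (γ := one) (α' := A') i (-t * one (n-2)) m
              (by omega)
              (fun t' ht' => by rw [hA', Function.update_of_ne (by omega)])
              (by rw [hA', show i+m-1 = n-2 by omega, Function.update_self])
          rw [e1, e2]
          have h3 := htf i (by omega)
          rw [show n-2-i = m-1 by omega, show n-1-i = m by omega] at h3
          simp only [one]
          nlinarith
        · have hceq : i + m = n := by omega
          match m, h1m with
          | 1, _ =>
            simp only [dd_one]
            rw [hA', Function.update_of_ne (by omega)]
            exact le_of_lt (ha' i (by omega))
          | (m+2), _ =>
            have hcor := dd_corner_last (α := a) (β := b) (γ := one) (α' := A')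
              (β' := B') i (n-2) (-t)
              (fun t' ht' => by rw [hA', Function.update_of_ne ht'])
              (by rw [hA', Function.update_self])
              (fun t' ht' => by rw [hB', Function.update_of_ne ht'])
              (by rw [hB', Function.update_self, show n-2+1 = n-1 by omega])
              (m+2) (by omega) (by omega)
            rw [hcor]
            exact hdd i (m+2) (by omega) (by omega)
    have hSu : IsUnit (trid n A' B' one) := by
      rw [Matrix.isUnit_iff_isUnit_det, isUnit_iff_ne_zero]
      have hdm : (trid n A' B' one).det
          = (chevE n (n-2) (-t)).det * (tridiag n a b).det := by
        rw [← heq, Matrix.det_mul]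
      rw [hdm, det_chevE, one_mul]
      exact hdet
    have hfact : tridiag n a b = chevE n (n-2) t * trid n A' B' one := by
      rw [← heq, ← Matrix.mul_assoc, chevE_mul_neg (n-2) (by omega) t, Matrix.one_mul]
    have hcontra := hirr (chevE n (n-2) t) (trid n A' B' one)
      (chevE_isUnit (n-2) (by omega) t) hSu
      (chevE_nonneg (n-1) (n-2) t (le_of_lt ht)) hSnn hfact
    exact hcontra.1 ⟨n-2, t, by omega, ht, Or.inl rfl⟩
  have hE0 : dd a b one 1 (n-1) = 0 := by
    by_contra hne0
    have hpos : 0 < dd a b one 1 (n-1) :=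
      lt_of_le_of_ne (hdd 1 (n-1) (le_refl _) (by omega)) (Ne.symm hne0)
    have hrne : (Finset.range (n-1)).Nonempty := ⟨0, Finset.mem_range.mpr (by omega)⟩
    set f : ℕ → ℝ := fun m => dd a b one 1 (m+1) / (b 0 * dd a b one 2 m) with hf
    set t : ℝ := min ((Finset.range (n-1)).inf' hrne f) (1 / a 0) with htdef
    have hfpos : ∀ m ∈ Finset.range (n-1), 0 < f m := by
      intro m hm
      have hm' := Finset.mem_range.mp hm
      apply div_pos
      · rcases Nat.lt_or_ge (m+1) (n-1) with hc | hc
        · exact hstrict 1 (m+1) (by omega) (by omega)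
        · rw [show m+1 = n-1 by omega]; exact hpos
      · exact mul_pos (hb' 0 (by omega)) (hstrict 2 m (by omega) (by omega))
    have ht : 0 < t := by
      apply lt_min
      · exact (Finset.lt_inf'_iff hrne).mpr hfpos
      · exact div_pos one_pos (ha' 0 (by omega))
    have htf : ∀ m, m < n-1 → t * (b 0 * dd a b one 2 m) ≤ dd a b one 1 (m+1) := by
      intro m hm
      have h1 : t ≤ f m :=
        le_trans (min_le_left _ _) (Finset.inf'_le f (Finset.mem_range.mpr hm))
      have h2 : 0 < b 0 * dd a b one 2 m :=
        mul_pos (hb' 0 (by omega)) (hstrict 2 m (by omega) (by omega))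
      rw [hf] at h1
      exact (le_div_iff₀ h2).mp h1
    have hta : t * a 0 ≤ 1 :=
      (le_div_iff₀ (ha' 0 (by omega))).mp (min_le_right _ _)
    set A'' := Function.update a 1 (a 1 + (-t) * b 0) with hA''
    set G'' := Function.update one 0 (one 0 + (-t) * a 0) with hG''
    have heq : (chevE n 0 (-t))ᵀ * tridiag n a b = trid n A'' b G'' := by
      rw [tridiag_eq]; exact rowop_first hn (-t) a b one
    have hSnn : IsKNonneg (n-1) (trid n A'' b G'') := by
      apply crit
      · intro p hp; exact le_of_lt (hb' p hp)
      · intro p _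
        by_cases hp0 : p = 0
        · subst hp0
          rw [hG'', Function.update_self]
          simp only [one]
          nlinarith [hta]
        · rw [hG'', Function.update_of_ne hp0]
          norm_num [one]
      · intro i m h1m hmk hr
        match i with
        | 0 =>
          have hcor := dd_corner_first (α := a) (β := b) (γ := one) (α' := A'')
            (γ' := G'') 0 (-t)
            (fun t' ht' => by rw [hA'', Function.update_of_ne (by omega)])
            (by rw [hA'', Function.update_self])
            (fun t' ht' => by rw [hG'', Function.update_of_ne ht'])
            (by rw [hG'', Function.update_self]) m
          rw [hcor]
          exact hdd 0 m (by omega) (by omega)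
        | 1 =>
          have e1 : dd A'' b G'' 1 m = dd A'' b one 1 m :=
            dd_congr _ _ (fun _ _ => rfl)
              (fun t' ht' => by rw [hG'', Function.update_of_ne (by omega)])
          have e2 : dd A'' b one 1 m
              = dd a b one 1 m + (-t * b 0) * dd a b one 2 (m-1) := by
            have := dd_shift_first (β := b) (γ := one) (α' := A'') 1 (-t * b 0)
              (fun t' ht' => by rw [hA'', Function.update_of_ne (by omega)])
              (by rw [hA'', Function.update_self]) m (by omega)
            rwa [show (1:ℕ)+1 = 2 from rfl] at this
          rw [e1, e2]
          have h3 := htf (m-1) (by omega)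
          rw [show m-1+1 = m by omega] at h3
          nlinarith
        | (i+2) =>
          have hcon : dd A'' b G'' (i+2) m = dd a b one (i+2) m := by
            apply dd_congr
            · intro t' ht'; rw [hA'', Function.update_of_ne (by omega)]
            · intro t' ht'; rw [hG'', Function.update_of_ne (by omega)]
          rw [hcon]
          exact hdd (i+2) m (by omega) (by omega)
    have hSu : IsUnit (trid n A'' b G'') := by
      rw [Matrix.isUnit_iff_isUnit_det, isUnit_iff_ne_zero]
      have hdm : (trid n A'' b G'').det
          = ((chevE n 0 (-t))ᵀ).det * (tridiag n a b).det := by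
        rw [← heq, Matrix.det_mul]
      rw [hdm, det_chevET, one_mul]
      exact hdet
    have hfact : tridiag n a b = (chevE n 0 t)ᵀ * trid n A'' b G'' := by
      have h1 : chevE n 0 (-t) * chevE n 0 t = 1 := by
        have := chevE_mul_neg (n := n) 0 (by omega) (-t)
        rwa [neg_neg] at this
      rw [← heq, ← Matrix.mul_assoc, ← Matrix.transpose_mul, h1,
        Matrix.transpose_one, Matrix.one_mul]
    have hcontra := hirr ((chevE n 0 t)ᵀ) (trid n A'' b G'')
      (chevE_transpose_isUnit 0 (by omega) t) hSu
      (chevE_transpose_nonneg (n-1) 0 t (le_of_lt ht)) hSnn hfact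
    exact hcontra.1 ⟨0, t, by omega, ht, Or.inr rfl⟩
  exact ⟨hn, hb', fun m hm => hstrict 0 m hm (by omega), hD0, hE0⟩

end

section
variable (a b : ℕ → ℝ)

/-- continued fractions are ratios of consecutive contiguous minors. -/
lemma cf_eq : ∀ y x, y ≤ x →
    (∀ s, 1 ≤ s → s ≤ y → 0 < dd a b one (x-y) s) →
    contFrac (fun t => a (x-t)) (fun t => b (x-t)) y
      = dd a b one (x-y) (y+1) / dd a b one (x-y) y := by
  intro y
  induction y with
  | zero =>
    intro x _ _
    simp [contFrac]
  | succ y IH =>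
    intro x hxy hch
    have hfa : (fun t => (fun t' => a (x-t')) (t+1)) = (fun t => a ((x-1)-t)) :=
      funext (fun t => congrArg a (by omega))
    have hfb : (fun t => (fun t' => b (x-t')) (t+1)) = (fun t => b ((x-1)-t)) :=
      funext (fun t => congrArg b (by omega))
    have hstep : contFrac (fun t => a (x-t)) (fun t => b (x-t)) (y+1)
        = a x - b (x-1) / contFrac (fun t => a ((x-1)-t)) (fun t => b ((x-1)-t)) y := by
      rw [contFrac, hfa, hfb]
      simp
    rw [hstep]
    have hstart : (x-1) - y = x - (y+1) := by omega
    have hinner := IH (x-1) (by omega) (by rw [hstart]; exact fun s h1 h2 => hch s h1 (by omega))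
    rw [hstart] at hinner
    rw [hinner]
    set i := x - (y+1) with hi
    have hdy1 : 0 < dd a b one i (y+1) := hch (y+1) (by omega) (le_refl _)
    have hdy : 0 < dd a b one i y := by
      rcases Nat.eq_zero_or_pos y with rfl | hy
      · norm_num
      · exact hch y (by omega) (by omega)
    have hrec : dd a b one i (y+2)
        = a x * dd a b one i (y+1) - one (x-1) * b (x-1) * dd a b one i y := by
      have := dd_two (α := a) (β := b) (γ := one) i y
      rwa [show i+y+1 = x by omega, show i+y = x-1 by omega] at this
    have hNne := ne_of_gt hdy1
    rw [show y+1+1 = y+2 from rfl, div_div_eq_mul_div, eq_div_iff hNne, sub_mul,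
      div_mul_cancel₀ _ hNne, hrec]
    simp only [one, one_mul]

end

end

end TriAux

/-- Characterization of invertible `(n-1)`-nonnegative `(n-1)`-irreducible
tridiagonal matrices. -/
theorem tridiag_irreducible_characterization (n : ℕ) (hn : 2 ≤ n) (a b : ℕ → ℝ)
    (ha : ∀ i, i < n → a i ≠ 0) (hb : ∀ i, i + 1 < n → b i ≠ 0) :
    (IsUnit (tridiag n a b) ∧ IsKNonneg (n - 1) (tridiag n a b) ∧
        KIrreducible (n - 1) (tridiag n a b)) ↔
      ((∀ i, i + 1 < n → 0 < b i) ∧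
        (∀ y, y + 2 < n → 0 < contFrac (fun t => a (y - t)) (fun t => b (y - t)) y) ∧
        contFrac (fun t => a (n - 2 - t)) (fun t => b (n - 2 - t)) (n - 2) = 0 ∧
        contFrac (fun t => a (n - 1 - t)) (fun t => b (n - 1 - t)) (n - 2) = 0) := by
  constructor
  · rintro ⟨hu, hnn, hirr⟩
    have hmf : TriAux.MF a b n := TriAux.mf_of_lhs hn ha hb hu hnn hirr
    have hrow1 := hmf.row1
    refine ⟨fun i hi => hmf.hb i hi, ?_, ?_, ?_⟩
    · intro y hy
      rw [TriAux.cf_eq a b y y (le_refl _)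
        (fun s h1 h2 => by
          rw [show y - y = 0 by omega]; exact hmf.hD s (by omega))]
      rw [show y - y = 0 by omega]
      exact div_pos (hmf.hD (y+1) (by omega)) (hmf.hD y (by omega))
    · rw [TriAux.cf_eq a b (n-2) (n-2) (le_refl _)
        (fun s h1 h2 => by
          rw [show n-2-(n-2) = 0 by omega]; exact hmf.hD s h2)]
      rw [show n-2-(n-2) = 0 by omega, show n-2+1 = n-1 by omega, hmf.hD0, zero_div]
    · rw [TriAux.cf_eq a b (n-2) (n-1) (by omega)
        (fun s h1 h2 => by
          rw [show n-1-(n-2) = 1 by omega]; exact hrow1 s h2)]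
      rw [show n-1-(n-2) = 1 by omega, show n-2+1 = n-1 by omega, hmf.hE0, zero_div]
  · rintro ⟨hbpos, h2, h3, h4⟩
    have hD : ∀ m, m ≤ n-2 → 0 < TriAux.dd a b TriAux.one 0 m := by
      intro m
      induction m using Nat.strong_induction_on with
      | _ m IH =>
        match m with
        | 0 => intro _; norm_num
        | (m+1) =>
          intro hm
          have hcf := h2 m (by omega)
          rw [TriAux.cf_eq a b m m (le_refl _)
            (fun s h1 h2' => by
              rw [show m - m = 0 by omega]; exact IH s (by omega) (by omega))] at hcf
          rw [show m - m = 0 by omega] at hcf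
          have hdm : 0 < TriAux.dd a b TriAux.one 0 m := IH m (by omega) (by omega)
          have := mul_pos hcf hdm
          rwa [div_mul_cancel₀ _ (ne_of_gt hdm)] at this
    have hD0 : TriAux.dd a b TriAux.one 0 (n-1) = 0 := by
      have hcf := h3
      rw [TriAux.cf_eq a b (n-2) (n-2) (le_refl _)
        (fun s h1 h2' => by
          rw [show n-2-(n-2) = 0 by omega]; exact hD s h2')] at hcf
      rw [show n-2-(n-2) = 0 by omega, show n-2+1 = n-1 by omega] at hcf
      exact (div_eq_zero_iff.mp hcf).resolve_right (ne_of_gt (hD (n-2) (le_refl _)))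
    have hrow1 : ∀ s, s ≤ n-2 → 0 < TriAux.dd a b TriAux.one 1 s := by
      apply TriAux.table_step hbpos (i := 0) (S := n-2) (by omega)
      · intro s hs
        rcases Nat.lt_or_ge (s+1) (n-1) with h | h
        · exact le_of_lt (hD (s+1) (by omega))
        · rw [show s+1 = n-1 by omega, hD0]
      · exact fun s hs => hD s hs
    have hE0 : TriAux.dd a b TriAux.one 1 (n-1) = 0 := by
      have hcf := h4
      rw [TriAux.cf_eq a b (n-2) (n-1) (by omega)
        (fun s h1 h2' => by
          rw [show n-1-(n-2) = 1 by omega]; exact hrow1 s h2')] at hcf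
      rw [show n-1-(n-2) = 1 by omega, show n-2+1 = n-1 by omega] at hcf
      exact (div_eq_zero_iff.mp hcf).resolve_right (ne_of_gt (hrow1 (n-2) (le_refl _)))
    have hmf : TriAux.MF a b n := ⟨hn, hbpos, hD, hD0, hE0⟩
    exact ⟨hmf.m_unit, hmf.m_nonneg, hmf.m_irred⟩
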